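/- Let G be an almost simple group with socle S, let K be a 2-closed permutation group with G* ≤ K ≤ Sym(G), let L be the minimal block of K and U the union of the right cosets of L equivalent to L, and suppose K is of normal type, i.e., L = S and K^L ≤ D(2,L), where L is regarded as a group in its own right. Then K^U ≤ D(2,U), where U is regarded as a group in its own right and D(2,U) is the corresponding subgroup of Sym(U). -/

import Mathlib

/-- The subgroup of `Sym(A)` consisting of the right translations `x ↦ x * g`. -/
def rightMuls (A : Type*) [Group A] : Subgroup (Equiv.Perm A) :=
  (MulAction.toPermHom Aᵐᵒᵖ A).range

/-- The holomorph of `A`, i.e. the normalizer in `Sym(A)` of the group of right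
translations. -/
def Hol (A : Type*) [Group A] : Subgroup (Equiv.Perm A) :=
  Subgroup.normalizer (rightMuls A : Set (Equiv.Perm A))

/-- `D(2,A)`: the subgroup of `Sym(A)` generated by `Hol(A)` and the inversion
permutation `g ↦ g⁻¹`. -/
def D2 (A : Type*) [Group A] : Subgroup (Equiv.Perm A) :=
  Hol A ⊔ Subgroup.closure {Equiv.inv A}

/-- The homomorphism `H × H →* Sym(A)` sending `(h₁, h₂)` to `x ↦ h₁ * x * h₂⁻¹`. -/
def biTransHom {A : Type*} [Group A] (H : Subgroup A) : H × H →* Equiv.Perm A where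
  toFun p := (Equiv.mulLeft (p.1 : A)).trans (Equiv.mulRight ((p.2 : A)⁻¹))
  map_one' := by ext x; simp
  map_mul' p q := by ext x; simp [mul_assoc]

/-- `H*`: the subgroup of `Sym(A)` of all permutations `x ↦ h₁ * x * h₂` with
`h₁, h₂ ∈ H`. -/
def starGroup {A : Type*} [Group A] (H : Subgroup A) : Subgroup (Equiv.Perm A) :=
  (biTransHom H).range

/-- The automorphism group of the Cayley graph `Cay(A, X)`: all permutations `f`
of `A` such that `h * g⁻¹ ∈ X ↔ f h * (f g)⁻¹ ∈ X` for all `g, h`. -/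
def cayAut {A : Type*} [Group A] (X : Set A) : Subgroup (Equiv.Perm A) where
  carrier := {f : Equiv.Perm A | ∀ g h : A, h * g⁻¹ ∈ X ↔ f h * (f g)⁻¹ ∈ X}
  one_mem' := by intro g h; simp
  mul_mem' := by
    intro a b ha hb g h
    simpa [Equiv.Perm.mul_apply] using (hb g h).trans (ha (b g) (b h))
  inv_mem' := by
    intro a ha g h
    simpa using (ha (a⁻¹ g) (a⁻¹ h)).symm

/-- A `K`-block: a subset `B` such that every `k ∈ K` either fixes `B` setwise or
moves it to a disjoint set. -/
def IsBlock {A : Type*} [Group A] (K : Subgroup (Equiv.Perm A)) (B : Set A) : Prop :=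
  ∀ k ∈ K, (k : Equiv.Perm A) '' B = B ∨ ((k : Equiv.Perm A) '' B) ∩ B = ∅

/-- The minimal block of `K`: the intersection of all `K`-blocks of size at least 2
containing the identity. -/
def minBlock {A : Type*} [Group A] (K : Subgroup (Equiv.Perm A)) : Set A :=
  ⋂₀ {B : Set A | IsBlock K B ∧ (1 : A) ∈ B ∧ 2 ≤ B.ncard}

/-- The right coset `L * g`. -/
def rcoset {A : Type*} [Group A] (L : Subgroup A) (g : A) : Set A :=
  {x : A | x * g⁻¹ ∈ L}

/-- `K_𝔏`: the subgroup of all elements of `K` mapping each right coset of `L` to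
itself. -/
def stabCosets {A : Type*} [Group A] (K : Subgroup (Equiv.Perm A)) (L : Subgroup A) :
    Subgroup (Equiv.Perm A) where
  carrier := {f : Equiv.Perm A | f ∈ K ∧ ∀ x : A, f x * x⁻¹ ∈ L}
  one_mem' := ⟨K.one_mem, fun x => by simpa using L.one_mem⟩
  mul_mem' := by
    rintro a b ⟨haK, ha⟩ ⟨hbK, hb⟩
    refine ⟨K.mul_mem haK hbK, fun x => ?_⟩
    have := L.mul_mem (ha (b x)) (hb x)
    simpa [Equiv.Perm.mul_apply, mul_assoc] using this
  inv_mem' := by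
    rintro a ⟨haK, ha⟩
    refine ⟨K.inv_mem haK, fun x => ?_⟩
    have := L.inv_mem (ha (a⁻¹ x))
    simpa [mul_inv_rev] using this

/-- Two subsets `X`, `X'` are equivalent (w.r.t. `K` and `L`) if every element of
`K_𝔏` fixes `X` pointwise iff it fixes `X'` pointwise. -/
def cosetEquiv {A : Type*} [Group A] (K : Subgroup (Equiv.Perm A)) (L : Subgroup A)
    (X X' : Set A) : Prop :=
  ∀ f ∈ stabCosets K L,
    ((∀ x ∈ X, (f : Equiv.Perm A) x = x) ↔ (∀ x ∈ X', (f : Equiv.Perm A) x = x))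

/-- The union `U` of the right cosets of `L` that are equivalent to `L`. -/
def Uset {A : Type*} [Group A] (K : Subgroup (Equiv.Perm A)) (L : Subgroup A) : Set A :=
  {x : A | cosetEquiv K L (L : Set A) (rcoset L x)}

/-- A permutation group `K` is 2-closed if it contains every permutation `f` such
that every pair of points can be moved as by `f` by some element of `K`. -/
def Is2Closed {A : Type*} [Group A] (K : Subgroup (Equiv.Perm A)) : Prop :=
  ∀ f : Equiv.Perm A, (∀ a b : A, ∃ k ∈ K, (k : Equiv.Perm A) a = f a ∧ k b = f b) → f ∈ K

@[simp] theorem Equiv.Perm.apply_inv_self {α : Type*} (f : Equiv.Perm α) (x : α) :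
    f (f⁻¹ x) = x := Equiv.apply_symm_apply f x

@[simp] theorem Equiv.Perm.inv_apply_self {α : Type*} (f : Equiv.Perm α) (x : α) :
    f⁻¹ (f x) = x := Equiv.symm_apply_apply f x

section Generic

variable {A : Type*} [Group A]

lemma mulRight_mem_rightMuls (a : A) : Equiv.mulRight a ∈ rightMuls A := by
  refine ⟨MulOpposite.op a, ?_⟩
  ext x
  simp [rightMuls]

lemma exists_of_mem_rightMuls {h : Equiv.Perm A} (hh : h ∈ rightMuls A) :
    ∃ a : A, h = Equiv.mulRight a := by
  obtain ⟨m, hm⟩ := hh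
  refine ⟨m.unop, ?_⟩
  ext x
  rw [← hm]
  simp

/-- `Pp p` : `p` is a "twisted homomorphism". -/
def Pp (p : Equiv.Perm A) : Prop := ∀ x y : A, p (x * y) = p x * (p 1)⁻¹ * p y

/-- `Qp p` : `p` is a "twisted antihomomorphism". -/
def Qp (p : Equiv.Perm A) : Prop := ∀ x y : A, p (x * y) = p y * (p 1)⁻¹ * p x

lemma Pp.div {p : Equiv.Perm A} (hp : Pp p) (a b : A) :
    p (a * b⁻¹) = p a * (p b)⁻¹ * p 1 := by
  have h := hp (a * b⁻¹) b
  rw [inv_mul_cancel_right] at h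
  rw [h]; group

lemma Qp.div {p : Equiv.Perm A} (hp : Qp p) (a b : A) :
    p (a * b⁻¹) = p 1 * (p b)⁻¹ * p a := by
  have h := hp (a * b⁻¹) b
  rw [inv_mul_cancel_right] at h
  rw [h]; group

lemma Pp.triple {p : Equiv.Perm A} (hp : Pp p) (u v w : A) :
    p (u * v⁻¹ * w) = p u * (p v)⁻¹ * p w := by
  rw [hp (u * v⁻¹) w, hp.div u v]; group

lemma Qp.triple {p : Equiv.Perm A} (hp : Qp p) (u v w : A) :
    p (u * v⁻¹ * w) = p w * (p v)⁻¹ * p u := by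
  rw [hp (u * v⁻¹) w, hp.div u v]; group

lemma pp_iff_hol {p : Equiv.Perm A} : Pp p ↔ p ∈ Hol A := by
  constructor
  · intro hp
    rw [Hol, Subgroup.mem_normalizer_iff]
    intro h
    constructor
    · intro hmem
      obtain ⟨a, rfl⟩ := exists_of_mem_rightMuls hmem
      have : p * Equiv.mulRight a * p⁻¹ = Equiv.mulRight ((p 1)⁻¹ * p a) := by
        ext x
        simp only [Equiv.Perm.mul_apply, Equiv.coe_mulRight]
        rw [hp (p⁻¹ x) a, Equiv.Perm.apply_inv_self]; group
      rw [this]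
      exact mulRight_mem_rightMuls _
    · intro hmem
      obtain ⟨a, ha⟩ := exists_of_mem_rightMuls hmem
      have hh : h = p⁻¹ * Equiv.mulRight a * p := by
        rw [← ha]; group
      have : p⁻¹ * Equiv.mulRight a * p = Equiv.mulRight (p⁻¹ (p 1 * a)) := by
        ext x
        simp only [Equiv.Perm.mul_apply, Equiv.coe_mulRight]
        apply p.injective
        rw [Equiv.Perm.apply_inv_self, hp x (p⁻¹ (p 1 * a)), Equiv.Perm.apply_inv_self]
        group
      rw [hh, this]
      exact mulRight_mem_rightMuls _
  · intro hp x y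
    have h1 : p * Equiv.mulRight y * p⁻¹ ∈ rightMuls A := by
      rw [Hol, Subgroup.mem_normalizer_iff] at hp
      exact (hp _).mp (mulRight_mem_rightMuls y)
    obtain ⟨b, hb⟩ := exists_of_mem_rightMuls h1
    have hpt : ∀ z : A, p (p⁻¹ z * y) = z * b := by
      intro z
      have := congrFun (congrArg (fun (e : Equiv.Perm A) => (e : A → A)) hb) z
      simpa [Equiv.Perm.mul_apply] using this
    have h2 := hpt (p 1)
    rw [Equiv.Perm.inv_apply_self, one_mul] at h2
    have h3 := hpt (p x)
    rw [Equiv.Perm.inv_apply_self] at h3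
    have hb2 : b = (p 1)⁻¹ * p y := by rw [h2]; group
    rw [h3, hb2]; group

lemma inv_perm_sq : (Equiv.inv A) * (Equiv.inv A) = 1 := by
  ext x; simp

lemma Qp.pp_mul_inv {p : Equiv.Perm A} (hp : Qp p) : Pp (p * Equiv.inv A) := by
  intro x y
  simp only [Equiv.Perm.mul_apply, Equiv.inv_apply, mul_inv_rev, inv_one]
  exact hp y⁻¹ x⁻¹

lemma Pp.mem_D2 {p : Equiv.Perm A} (hp : Pp p) : p ∈ D2 A := by
  show p ∈ Hol A ⊔ Subgroup.closure {Equiv.inv A}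
  exact Subgroup.mem_sup_left (pp_iff_hol.mp hp)

lemma inv_mem_D2 : Equiv.inv A ∈ D2 A := by
  show _ ∈ Hol A ⊔ Subgroup.closure {Equiv.inv A}
  exact Subgroup.mem_sup_right (Subgroup.subset_closure rfl)

lemma Qp.mem_D2 {p : Equiv.Perm A} (hp : Qp p) : p ∈ D2 A := by
  have h : p = (p * Equiv.inv A) * Equiv.inv A := by
    rw [mul_assoc, inv_perm_sq, mul_one]
  rw [h]
  exact mul_mem hp.pp_mul_inv.mem_D2 inv_mem_D2

end Generic
section Generic2

variable {A : Type*} [Group A]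

lemma Pp.inv {p : Equiv.Perm A} (hp : Pp p) : Pp p⁻¹ := by
  intro x y
  apply p.injective
  rw [Equiv.Perm.apply_inv_self, hp.triple (p⁻¹ x) (p⁻¹ 1) (p⁻¹ y)]
  simp [Equiv.Perm.apply_inv_self]

lemma Qp.inv {p : Equiv.Perm A} (hp : Qp p) : Qp p⁻¹ := by
  intro x y
  apply p.injective
  rw [Equiv.Perm.apply_inv_self, hp.triple (p⁻¹ y) (p⁻¹ 1) (p⁻¹ x)]
  simp [Equiv.Perm.apply_inv_self]

lemma pq_mul {p q : Equiv.Perm A} :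
    (Pp p ∨ Qp p) → (Pp q ∨ Qp q) → (Pp (p * q) ∨ Qp (p * q)) := by
  have key : ∀ (p q : Equiv.Perm A), Pp p → Pp q → Pp (p * q) := by
    intro p q hp hq x y
    simp only [Equiv.Perm.mul_apply]
    rw [hq x y, hp.triple (q x) (q 1) (q y)]
  have keyQP : ∀ (p q : Equiv.Perm A), Qp p → Pp q → Qp (p * q) := by
    intro p q hp hq x y
    simp only [Equiv.Perm.mul_apply]
    rw [hq x y, hp.triple (q x) (q 1) (q y)]
  have keyPQ : ∀ (p q : Equiv.Perm A), Pp p → Qp q → Qp (p * q) := by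
    intro p q hp hq x y
    simp only [Equiv.Perm.mul_apply]
    rw [hq x y, hp.triple (q y) (q 1) (q x)]
  have keyQQ : ∀ (p q : Equiv.Perm A), Qp p → Qp q → Pp (p * q) := by
    intro p q hp hq x y
    simp only [Equiv.Perm.mul_apply]
    rw [hq x y, hp.triple (q y) (q 1) (q x)]
  rintro (hp | hp) (hq | hq)
  · exact Or.inl (key _ _ hp hq)
  · exact Or.inr (keyPQ _ _ hp hq)
  · exact Or.inr (keyQP _ _ hp hq)
  · exact Or.inl (keyQQ _ _ hp hq)

/-- The subgroup of twisted homo/antihomomorphisms. -/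
def Wgrp (A : Type*) [Group A] : Subgroup (Equiv.Perm A) where
  carrier := {p | Pp p ∨ Qp p}
  one_mem' := Or.inl (by intro x y; simp)
  mul_mem' := fun ha hb => pq_mul ha hb
  inv_mem' := by
    rintro p (hp | hp)
    · exact Or.inl hp.inv
    · exact Or.inr hp.inv

lemma Pp_or_Qp_of_mem_D2 {p : Equiv.Perm A} (hp : p ∈ D2 A) : Pp p ∨ Qp p := by
  have hle : D2 A ≤ Wgrp A := by
    apply sup_le
    · intro q hq
      exact Or.inl (pp_iff_hol.mpr hq)
    · rw [Subgroup.closure_le]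
      rintro q rfl
      right
      intro x y
      simp only [Equiv.inv_apply, mul_inv_rev, inv_one, mul_one]
  exact hle hp

end Generic2
section Specific

variable {G : Type*} [Group G] {K : Subgroup (Equiv.Perm G)} {L U : Subgroup G}

lemma mulRight_mem_K (hGK : starGroup (⊤ : Subgroup G) ≤ K) (c : G) :
    Equiv.mulRight c ∈ K := by
  apply hGK
  refine ⟨(⟨1, Subgroup.mem_top 1⟩, ⟨c⁻¹, Subgroup.mem_top c⁻¹⟩), ?_⟩
  ext x
  simp [biTransHom]

lemma mulLeft_mem_K (hGK : starGroup (⊤ : Subgroup G) ≤ K) (c : G) :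
    Equiv.mulLeft c ∈ K := by
  apply hGK
  refine ⟨(⟨c, Subgroup.mem_top c⟩, ⟨1, Subgroup.mem_top 1⟩), ?_⟩
  ext x
  simp [biTransHom]

lemma isBlock_minBlock (K : Subgroup (Equiv.Perm G)) : IsBlock K (minBlock K) := by
  intro k hk
  by_cases hemp : {B : Set G | IsBlock K B ∧ (1 : G) ∈ B ∧ 2 ≤ B.ncard} = ∅
  · left
    rw [minBlock, hemp, Set.sInter_empty, Set.image_univ, Equiv.range_eq_univ]
  · by_cases hdis : ((k : Equiv.Perm G) '' minBlock K) ∩ minBlock K = ∅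
    · right; exact hdis
    · left
      obtain ⟨z, hz1, hz2⟩ := Set.nonempty_iff_ne_empty.mpr hdis
      have hfix : ∀ B ∈ {B : Set G | IsBlock K B ∧ (1 : G) ∈ B ∧ 2 ≤ B.ncard},
          (k : Equiv.Perm G) '' B = B := by
        intro B hB
        rcases hB.1 k hk with h | h
        · exact h
        · exfalso
          have hzB : z ∈ (k : Equiv.Perm G) '' B := by
            obtain ⟨w, hw, rfl⟩ := hz1
            exact ⟨w, Set.sInter_subset_of_mem hB hw, rfl⟩
          have hzB2 : z ∈ B := Set.sInter_subset_of_mem hB hz2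
          exact Set.eq_empty_iff_forall_notMem.mp h z ⟨hzB, hzB2⟩
      apply Set.Subset.antisymm
      · rintro _ ⟨x, hx, rfl⟩
        intro B hB
        rw [← hfix B hB]
        exact ⟨x, Set.mem_sInter.mp hx B hB, rfl⟩
      · intro y hy
        refine ⟨(k : Equiv.Perm G).symm y, ?_, Equiv.apply_symm_apply _ _⟩
        intro B hB
        have h1 : y ∈ (k : Equiv.Perm G) '' B := by
          rw [hfix B hB]; exact Set.mem_sInter.mp hy B hB
        obtain ⟨w, hw, hwk⟩ := h1
        have : (k : Equiv.Perm G).symm y = w := by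
          rw [← hwk]; exact Equiv.symm_apply_apply _ _
        rwa [this]

lemma fix_L_iff (hL : (L : Set G) = minBlock K) {k : Equiv.Perm G} (hk : k ∈ K)
    (hk1 : k 1 = 1) : ∀ x : G, x ∈ L ↔ k x ∈ L := by
  have hblock : IsBlock K (L : Set G) := by rw [hL]; exact isBlock_minBlock K
  have himg : k '' (L : Set G) = L := by
    rcases hblock k hk with h | h
    · exact h
    · exfalso
      refine Set.eq_empty_iff_forall_notMem.mp h 1 ⟨⟨1, L.one_mem, hk1⟩, L.one_mem⟩
  intro x
  constructor
  · intro hx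
    have : k x ∈ k '' (L : Set G) := ⟨x, hx, rfl⟩
    rwa [himg] at this
  · intro hx
    have hx' : k x ∈ k '' (L : Set G) := by rw [himg]; exact hx
    obtain ⟨y, hy, hky⟩ := hx'
    rwa [← k.injective hky]

lemma coset_mem (hGK : starGroup (⊤ : Subgroup G) ≤ K) (hL : (L : Set G) = minBlock K)
    {k : Equiv.Perm G} (hk : k ∈ K) {a b : G} (hab : a * b⁻¹ ∈ L) :
    k a * (k b)⁻¹ ∈ L := by
  set k' : Equiv.Perm G := Equiv.mulRight (k b)⁻¹ * (k * Equiv.mulRight b) with hk'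
  have hk'K : k' ∈ K :=
    mul_mem (mulRight_mem_K hGK _) (mul_mem hk (mulRight_mem_K hGK _))
  have hk'1 : k' 1 = 1 := by
    simp [hk', Equiv.Perm.mul_apply]
  have := (fix_L_iff hL hk'K hk'1 (a * b⁻¹)).mp hab
  simpa [hk', Equiv.Perm.mul_apply, inv_mul_cancel_right] using this

lemma mem_stabCosets_iff {f : Equiv.Perm G} :
    f ∈ stabCosets K L ↔ f ∈ K ∧ ∀ x : G, f x * x⁻¹ ∈ L := Iff.rfl

lemma mulRight_mem_stab (hGK : starGroup (⊤ : Subgroup G) ≤ K) (hLn : L.Normal)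
    {l : G} (hl : l ∈ L) : Equiv.mulRight l ∈ stabCosets K L := by
  refine ⟨mulRight_mem_K hGK l, fun x => ?_⟩
  simpa using hLn.conj_mem l hl x

lemma mulLeft_mem_stab (hGK : starGroup (⊤ : Subgroup G) ≤ K)
    {l : G} (hl : l ∈ L) : Equiv.mulLeft l ∈ stabCosets K L := by
  refine ⟨mulLeft_mem_K hGK l, fun x => ?_⟩
  simpa using hl

lemma conj_mem_stab (hGK : starGroup (⊤ : Subgroup G) ≤ K) (hL : (L : Set G) = minBlock K)
    {m k : Equiv.Perm G} (hm : m ∈ stabCosets K L) (hk : k ∈ K) :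
    k⁻¹ * m * k ∈ stabCosets K L := by
  obtain ⟨hmK, hmc⟩ := mem_stabCosets_iff.mp hm
  refine ⟨mul_mem (mul_mem (inv_mem hk) hmK) hk, fun x => ?_⟩
  have h1 : m (k x) * (k x)⁻¹ ∈ L := hmc (k x)
  have h2 := coset_mem hGK hL (inv_mem hk) h1
  simpa [Equiv.Perm.mul_apply, Equiv.Perm.inv_apply_self] using h2

lemma L_subset_U (hU : (U : Set G) = Uset K L) {l : G} (hl : l ∈ L) : l ∈ U := by
  have : l ∈ Uset K L := by
    intro f _
    have hset : rcoset L l = (L : Set G) := by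
      ext x
      exact mul_mem_cancel_right (inv_mem hl)
    rw [hset]
  show l ∈ (U : Set G)
  rw [hU]; exact this

lemma fixes_U (hU : (U : Set G) = Uset K L) {m : Equiv.Perm G}
    (hm : m ∈ stabCosets K L) (hfix : ∀ x ∈ (L : Set G), m x = x) :
    ∀ u : G, u ∈ U → m u = u := by
  intro u hu
  have hu' : u ∈ Uset K L := by rw [← hU]; exact hu
  have := (hu' m hm).mp hfix
  exact this u (by show u * u⁻¹ ∈ L; simpa using L.one_mem)

end Specific
section Rigidity

variable {G : Type*} [Group G] {K : Subgroup (Equiv.Perm G)} {L U : Subgroup G}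

lemma B_eq_id (hGK : starGroup (⊤ : Subgroup G) ≤ K) (hL : (L : Set G) = minBlock K)
    (hU : (U : Set G) = Uset K L) (hLn : L.Normal)
    (hcent : ∀ g : G, (∀ s ∈ L, g * s = s * g) → g = 1)
    {B : Equiv.Perm G} (hBK : B ∈ K) (hBfix : ∀ x ∈ (L : Set G), B x = x) :
    ∀ z : G, z ∈ U → B z = z := by
  have hBfix' : ∀ x ∈ (L : Set G), B⁻¹ x = x := by
    intro x hx
    conv_lhs => rw [← hBfix x hx]
    exact Equiv.Perm.inv_apply_self B x
  have rel1 : ∀ z : G, z ∈ U → ∀ l ∈ L, B (z * l) = B z * l := by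
    intro z hz l hl
    have hC : B⁻¹ * Equiv.mulRight l * B ∈ stabCosets K L :=
      conj_mem_stab hGK hL (mulRight_mem_stab hGK hLn hl) hBK
    have hM : (B⁻¹ * Equiv.mulRight l * B) * Equiv.mulRight l⁻¹ ∈ stabCosets K L :=
      mul_mem hC (mulRight_mem_stab hGK hLn (inv_mem hl))
    have hMfix : ∀ x ∈ (L : Set G),
        ((B⁻¹ * Equiv.mulRight l * B) * Equiv.mulRight l⁻¹) x = x := by
      intro x hx
      have hx' : x * l⁻¹ ∈ L := mul_mem hx (inv_mem hl)
      simp only [Equiv.Perm.mul_apply, Equiv.coe_mulRight]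
      rw [hBfix _ hx', inv_mul_cancel_right, hBfix' x hx]
    have h2 := fixes_U hU hM hMfix (z * l) (mul_mem hz (L_subset_U hU hl))
    simp only [Equiv.Perm.mul_apply, Equiv.coe_mulRight] at h2
    rw [mul_inv_cancel_right] at h2
    have h3 := congrArg B h2
    rw [Equiv.Perm.apply_inv_self] at h3
    exact h3.symm
  have rel2 : ∀ z : G, z ∈ U → ∀ l ∈ L, B (l * z) = l * B z := by
    intro z hz l hl
    have hC : B⁻¹ * Equiv.mulLeft l * B ∈ stabCosets K L :=
      conj_mem_stab hGK hL (mulLeft_mem_stab hGK hl) hBK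
    have hM : (B⁻¹ * Equiv.mulLeft l * B) * Equiv.mulLeft l⁻¹ ∈ stabCosets K L :=
      mul_mem hC (mulLeft_mem_stab hGK (inv_mem hl))
    have hMfix : ∀ x ∈ (L : Set G),
        ((B⁻¹ * Equiv.mulLeft l * B) * Equiv.mulLeft l⁻¹) x = x := by
      intro x hx
      have hx' : l⁻¹ * x ∈ L := mul_mem (inv_mem hl) hx
      simp only [Equiv.Perm.mul_apply, Equiv.coe_mulLeft]
      rw [hBfix _ hx', mul_inv_cancel_left, hBfix' x hx]
    have h2 := fixes_U hU hM hMfix (l * z) (mul_mem (L_subset_U hU hl) hz)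
    simp only [Equiv.Perm.mul_apply, Equiv.coe_mulLeft] at h2
    rw [inv_mul_cancel_left] at h2
    have h3 := congrArg B h2
    rw [Equiv.Perm.apply_inv_self] at h3
    exact h3.symm
  intro z hz
  have hone : z⁻¹ * B z = 1 := by
    apply hcent
    intro s hs
    have h1 := rel1 z hz s hs
    have h2 := rel2 z hz (z * s * z⁻¹) (hLn.conj_mem s hs z)
    rw [show z * s * z⁻¹ * z = z * s by group] at h2
    have key : B z * s = z * s * z⁻¹ * B z := by rw [← h1, h2]
    calc (z⁻¹ * B z) * s = z⁻¹ * (B z * s) := by group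
      _ = z⁻¹ * (z * s * z⁻¹ * B z) := by rw [key]
      _ = s * (z⁻¹ * B z) := by group
  exact (inv_mul_eq_one.mp hone).symm

end Rigidity
/-- if `K` is of normal type, then `K^U ≤ D(2,U)`. -/
theorem normal_type_KU_le_D2 (G : Type*) [Group G] [Fintype G]
    (S : Subgroup G) (hSnormal : S.Normal) (hSsimple : IsSimpleGroup S)
    (hSnonabelian : ¬ ∀ a b : S, a * b = b * a)
    (hScent : ∀ g : G, (∀ s ∈ S, g * s = s * g) → g = 1)
    (K : Subgroup (Equiv.Perm G)) (hGK : starGroup (⊤ : Subgroup G) ≤ K)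
    (h2cl : Is2Closed K)
    (L : Subgroup G) (hL : (L : Set G) = minBlock K)
    (U : Subgroup G) (hU : (U : Set G) = Uset K L)
    (hLS : L = S)
    (hnormaltype : ∀ f ∈ K, ∀ hf : (∀ x : G, x ∈ L ↔ (f : Equiv.Perm G) x ∈ L),
      Equiv.Perm.subtypePerm f (fun x => (hf x).symm) ∈ D2 ↥L) :
    ∀ f ∈ K, ∀ hf : (∀ x : G, x ∈ U ↔ (f : Equiv.Perm G) x ∈ U),
      Equiv.Perm.subtypePerm f (fun x => (hf x).symm) ∈ D2 ↥U := by
  have hLn : L.Normal := by rw [hLS]; exact hSnormal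
  have hcent : ∀ g : G, (∀ s ∈ L, g * s = s * g) → g = 1 := by
    intro g hg
    exact hScent g (fun s hs => hg s (by rw [hLS]; exact hs))
  intro f hfK hf
  set g : G := f 1 with hg
  have hgU : g ∈ U := (hf 1).mp U.one_mem
  set f₀ : Equiv.Perm G := Equiv.mulRight g⁻¹ * f with hf₀def
  have hf₀app : ∀ x : G, f₀ x = f x * g⁻¹ := by
    intro x; simp [hf₀def, Equiv.Perm.mul_apply]
  have hf₀K : f₀ ∈ K := mul_mem (mulRight_mem_K hGK _) hfK
  have hf₀1 : f₀ 1 = 1 := by rw [hf₀app, ← hg]; simp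
  have hf₀L : ∀ x : G, x ∈ L ↔ f₀ x ∈ L := fix_L_iff hL hf₀K hf₀1
  have hinv0L : ∀ x : G, x ∈ L → f₀⁻¹ x ∈ L := by
    intro x hx
    exact (hf₀L _).mpr (by rwa [Equiv.Perm.apply_inv_self])
  have hf₀U : ∀ x : G, x ∈ U ↔ f₀ x ∈ U := by
    intro x
    rw [hf₀app]
    exact (hf x).trans (mul_mem_cancel_right (inv_mem hgU)).symm
  have hD2L := hnormaltype f₀ hf₀K hf₀L
  -- the goal, reformulated
  have hgoal : ∀ (h : ∀ u v : G, u ∈ U → v ∈ U →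
      f (u * v) = f u * (f 1)⁻¹ * f v), Equiv.Perm.subtypePerm f (fun x => (hf x).symm) ∈ D2 ↥U := by
    intro h
    apply Pp.mem_D2
    intro x y
    apply Subtype.ext
    push_cast [Equiv.Perm.subtypePerm_apply]
    exact h x y x.2 y.2
  have hgoal' : ∀ (h : ∀ u v : G, u ∈ U → v ∈ U →
      f (u * v) = f v * (f 1)⁻¹ * f u), Equiv.Perm.subtypePerm f (fun x => (hf x).symm) ∈ D2 ↥U := by
    intro h
    apply Qp.mem_D2
    intro x y
    apply Subtype.ext
    push_cast [Equiv.Perm.subtypePerm_apply]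
    exact h x y x.2 y.2
  rcases Pp_or_Qp_of_mem_D2 hD2L with hA | hB
  -- Case A : f₀ restricted to L is a twisted homomorphism
  · have hmulL : ∀ a b : G, a ∈ L → b ∈ L → f₀ (a * b) = f₀ a * f₀ b := by
      intro a b ha hb
      have h := hA ⟨a, ha⟩ ⟨b, hb⟩
      have hval := congrArg Subtype.val h
      push_cast [Equiv.Perm.subtypePerm_apply] at hval
      rw [hf₀1] at hval
      simpa using hval
    -- cross multiplicativity : left factor in L, right factor in U
    have hcross : ∀ l : G, l ∈ L → ∀ y : G, y ∈ U → f₀ (l * y) = f₀ l * f₀ y := by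
      intro l hl y hy
      have hE : f₀ * Equiv.mulLeft l * f₀⁻¹ ∈ stabCosets K L := by
        have := conj_mem_stab hGK hL (mulLeft_mem_stab hGK hl) (inv_mem hf₀K)
        rwa [inv_inv] at this
      have hfl : f₀ l ∈ L := (hf₀L l).mp hl
      have hM : (f₀ * Equiv.mulLeft l * f₀⁻¹) * Equiv.mulLeft (f₀ l)⁻¹ ∈ stabCosets K L :=
        mul_mem hE (mulLeft_mem_stab hGK (inv_mem hfl))
      have hMfix : ∀ x ∈ (L : Set G),
          ((f₀ * Equiv.mulLeft l * f₀⁻¹) * Equiv.mulLeft (f₀ l)⁻¹) x = x := by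
        intro x hx
        have hx1 : (f₀ l)⁻¹ * x ∈ L := mul_mem (inv_mem hfl) hx
        have hx2 : f₀⁻¹ ((f₀ l)⁻¹ * x) ∈ L := hinv0L _ hx1
        simp only [Equiv.Perm.mul_apply, Equiv.coe_mulLeft]
        rw [hmulL l _ hl hx2, Equiv.Perm.apply_inv_self, mul_inv_cancel_left]
      have huu : f₀ l * f₀ y ∈ U :=
        mul_mem (L_subset_U hU hfl) ((hf₀U y).mp hy)
      have h2 := fixes_U hU hM hMfix (f₀ l * f₀ y) huu
      simp only [Equiv.Perm.mul_apply, Equiv.coe_mulLeft] at h2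
      rw [inv_mul_cancel_left, Equiv.Perm.inv_apply_self] at h2
      exact h2
    -- full multiplicativity on U
    have hmulU : ∀ u : G, u ∈ U → ∀ v : G, v ∈ U → f₀ (v * u) = f₀ v * f₀ u := by
      intro u hu
      set B : Equiv.Perm G := Equiv.mulRight (f₀ u)⁻¹ * f₀ * Equiv.mulRight u * f₀⁻¹
        with hBdef
      have hBapp : ∀ z : G, B z = f₀ (f₀⁻¹ z * u) * (f₀ u)⁻¹ := by
        intro z; simp [hBdef, Equiv.Perm.mul_apply]
      have hBK : B ∈ K :=
        mul_mem (mul_mem (mul_mem (mulRight_mem_K hGK _) hf₀K) (mulRight_mem_K hGK _))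
          (inv_mem hf₀K)
      have hBfix : ∀ x ∈ (L : Set G), B x = x := by
        intro x hx
        have hx' : f₀⁻¹ x ∈ L := hinv0L x hx
        rw [hBapp, hcross _ hx' u hu, Equiv.Perm.apply_inv_self, mul_inv_cancel_right]
      intro v hv
      have hBz := B_eq_id hGK hL hU hLn hcent hBK hBfix (f₀ v) ((hf₀U v).mp hv)
      rw [hBapp, Equiv.Perm.inv_apply_self] at hBz
      rw [← hBz]; group
    apply hgoal
    intro u v hu hv
    have h := hmulU v hv u hu
    rw [hf₀app, hf₀app, hf₀app] at h
    -- h : f (u*v) * g⁻¹ = (f u * g⁻¹) * (f v * g⁻¹)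
    rw [← hg]
    have := congrArg (fun t => t * g) h
    simp only [inv_mul_cancel_right] at this
    rw [this]; group
  -- Case B : f₀ restricted to L is a twisted antihomomorphism
  · have hmulL : ∀ a b : G, a ∈ L → b ∈ L → f₀ (a * b) = f₀ b * f₀ a := by
      intro a b ha hb
      have h := hB ⟨a, ha⟩ ⟨b, hb⟩
      have hval := congrArg Subtype.val h
      push_cast [Equiv.Perm.subtypePerm_apply] at hval
      rw [hf₀1] at hval
      simpa using hval
    have hcross : ∀ l : G, l ∈ L → ∀ y : G, y ∈ U → f₀ (l * y) = f₀ y * f₀ l := by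
      intro l hl y hy
      have hE : f₀ * Equiv.mulLeft l * f₀⁻¹ ∈ stabCosets K L := by
        have := conj_mem_stab hGK hL (mulLeft_mem_stab hGK hl) (inv_mem hf₀K)
        rwa [inv_inv] at this
      have hfl : f₀ l ∈ L := (hf₀L l).mp hl
      have hM : (f₀ * Equiv.mulLeft l * f₀⁻¹) * Equiv.mulRight (f₀ l)⁻¹ ∈ stabCosets K L :=
        mul_mem hE (mulRight_mem_stab hGK hLn (inv_mem hfl))
      have hMfix : ∀ x ∈ (L : Set G),
          ((f₀ * Equiv.mulLeft l * f₀⁻¹) * Equiv.mulRight (f₀ l)⁻¹) x = x := by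
        intro x hx
        have hx1 : x * (f₀ l)⁻¹ ∈ L := mul_mem hx (inv_mem hfl)
        have hx2 : f₀⁻¹ (x * (f₀ l)⁻¹) ∈ L := hinv0L _ hx1
        simp only [Equiv.Perm.mul_apply, Equiv.coe_mulRight, Equiv.coe_mulLeft]
        rw [hmulL l _ hl hx2, Equiv.Perm.apply_inv_self, inv_mul_cancel_right]
      have huu : f₀ y * f₀ l ∈ U :=
        mul_mem ((hf₀U y).mp hy) (L_subset_U hU hfl)
      have h2 := fixes_U hU hM hMfix (f₀ y * f₀ l) huu
      simp only [Equiv.Perm.mul_apply, Equiv.coe_mulRight, Equiv.coe_mulLeft] at h2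
      rw [mul_inv_cancel_right, Equiv.Perm.inv_apply_self] at h2
      exact h2
    have hmulU : ∀ u : G, u ∈ U → ∀ v : G, v ∈ U → f₀ (v * u) = f₀ u * f₀ v := by
      intro u hu
      set B : Equiv.Perm G := Equiv.mulLeft (f₀ u)⁻¹ * f₀ * Equiv.mulRight u * f₀⁻¹
        with hBdef
      have hBapp : ∀ z : G, B z = (f₀ u)⁻¹ * f₀ (f₀⁻¹ z * u) := by
        intro z; simp [hBdef, Equiv.Perm.mul_apply]
      have hBK : B ∈ K :=
        mul_mem (mul_mem (mul_mem (mulLeft_mem_K hGK _) hf₀K) (mulRight_mem_K hGK _))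
          (inv_mem hf₀K)
      have hBfix : ∀ x ∈ (L : Set G), B x = x := by
        intro x hx
        have hx' : f₀⁻¹ x ∈ L := hinv0L x hx
        rw [hBapp, hcross _ hx' u hu, Equiv.Perm.apply_inv_self, inv_mul_cancel_left]
      intro v hv
      have hBz := B_eq_id hGK hL hU hLn hcent hBK hBfix (f₀ v) ((hf₀U v).mp hv)
      rw [hBapp, Equiv.Perm.inv_apply_self] at hBz
      rw [← hBz]; group
    apply hgoal'
    intro u v hu hv
    have h := hmulU v hv u hu
    rw [hf₀app, hf₀app, hf₀app] at h
    rw [← hg]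
    have := congrArg (fun t => t * g) h
    simp only [inv_mul_cancel_right] at this
    rw [this]; group
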